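/- Let f : ℝⁿ → ℝ be continuously differentiable, let δ ∈ (0,1) and σ ∈ (0,1), and let {x_k}, {d_k}, {s_k} ⊆ ℝⁿ be sequences converging respectively to x̄, d̄, s̄ ∈ ℝⁿ. For each k define the quadratic curve γ_k(t) = x_k + t·d_k + t²·(s_k − d_k). Suppose that for every q ∈ ℕ and every k, f(γ_k(δ^q)) > f(x_k) + σ·δ^q·∇f(x_k)ᵀd_k. Then ∇f(x̄)ᵀd̄ ≥ 0. -/

import Mathlib

open Filter Topology

/-- if along convergent sequences `x_k → x̄`, `d_k → d̄`, `s_k → s̄` the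
Armijo-type sufficient decrease condition fails along the quadratic curves at every stepsize
`δ^q`, then `∇f(x̄)ᵀd̄ ≥ 0`. -/
theorem stmt_13 {n : ℕ} (f : EuclideanSpace ℝ (Fin n) → ℝ) (hf : ContDiff ℝ 1 f)
    (δ σ : ℝ) (hδ : δ ∈ Set.Ioo (0 : ℝ) 1) (hσ : σ ∈ Set.Ioo (0 : ℝ) 1)
    (x d s : ℕ → EuclideanSpace ℝ (Fin n))
    (xbar dbar sbar : EuclideanSpace ℝ (Fin n))
    (hx : Filter.Tendsto x Filter.atTop (nhds xbar))
    (hd : Filter.Tendsto d Filter.atTop (nhds dbar))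
    (hs : Filter.Tendsto s Filter.atTop (nhds sbar))
    (hfail : ∀ q k : ℕ,
      f (x k + (δ ^ q) • d k + (δ ^ q) ^ 2 • (s k - d k)) >
        f (x k) + σ * δ ^ q * fderiv ℝ f (x k) (d k)) :
    0 ≤ fderiv ℝ f xbar dbar := by
  obtain ⟨hδ0, hδ1⟩ := hδ
  obtain ⟨hσ0, hσ1⟩ := hσ
  set D : ℝ := fderiv ℝ f xbar dbar with hD
  have hfc : Continuous f := hf.continuous
  have hfd : Continuous fun y => fderiv ℝ f y := hf.continuous_fderiv one_ne_zero
  -- Step 1: pass to the limit in k for each q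
  have key : ∀ q : ℕ,
      f (xbar + (δ ^ q) • dbar + (δ ^ q) ^ 2 • (sbar - dbar)) ≥
        f xbar + σ * δ ^ q * D := by
    intro q
    set t := δ ^ q with ht
    have h1 : Tendsto (fun k => f (x k + t • d k + t ^ 2 • (s k - d k))) atTop
        (𝓝 (f (xbar + t • dbar + t ^ 2 • (sbar - dbar)))) :=
      (hfc.tendsto _).comp (((hx.add (hd.const_smul t)).add
        ((hs.sub hd).const_smul (t ^ 2))))
    have h2 : Tendsto (fun k => f (x k) + σ * t * fderiv ℝ f (x k) (d k)) atTop
        (𝓝 (f xbar + σ * t * D)) := by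
      refine ((hfc.tendsto _).comp hx).add (Tendsto.const_mul _ ?_)
      have hp : Tendsto (fun k => (fderiv ℝ f (x k), d k)) atTop
          (𝓝 (fderiv ℝ f xbar, dbar)) := ((hfd.tendsto _).comp hx).prodMk_nhds hd
      exact (isBoundedBilinearMap_apply.continuous.tendsto _).comp hp
    exact le_of_tendsto_of_tendsto' h2 h1 fun k => (hfail q k).le
  -- Step 2: the curve and its derivative at 0
  set g : ℝ → EuclideanSpace ℝ (Fin n) :=
    fun t => xbar + t • dbar + t ^ 2 • (sbar - dbar) with hg
  have hg0 : g 0 = xbar := by simp [hg]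
  have hgd : HasDerivAt g dbar 0 := by
    have h1 : HasDerivAt (fun t : ℝ => t • dbar) dbar 0 := by
      simpa using (hasDerivAt_id (0:ℝ)).smul_const dbar
    have h2 := (hasDerivAt_pow 2 (0:ℝ)).smul_const (sbar - dbar)
    have := ((hasDerivAt_const (0:ℝ) xbar).add h1).add h2
    exact this.congr_deriv (by simp)
  have hF : HasDerivAt (fun t => f (g t)) D 0 := by
    have hdf : HasFDerivAt f (fderiv ℝ f (g 0)) (g 0) :=
      (hf.differentiable one_ne_zero _).hasFDerivAt
    have := hdf.comp_hasDerivAt 0 hgd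
    exact this.congr_deriv (by simp [hg0, hD])
  -- Step 3: slopes along δ^q tend to D
  have htq : Tendsto (fun q : ℕ => δ ^ q) atTop (𝓝[≠] 0) := by
    apply tendsto_nhdsWithin_of_tendsto_nhds_of_eventually_within
    · exact tendsto_pow_atTop_nhds_zero_of_lt_one hδ0.le hδ1
    · exact Eventually.of_forall fun q => (pow_pos hδ0 q).ne'
  have hslope : Tendsto (fun q : ℕ => (δ ^ q)⁻¹ * (f (g (δ ^ q)) - f xbar)) atTop (𝓝 D) := by
    have := (hasDerivAt_iff_tendsto_slope.mp hF).comp htq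
    simpa [Function.comp_def, slope_def_field, div_eq_inv_mul, hg0] using this
  have hge : σ * D ≤ D := by
    refine ge_of_tendsto hslope (Eventually.of_forall fun q => ?_)
    have hq : (0:ℝ) < δ ^ q := pow_pos hδ0 q
    have := key q
    have h' : σ * δ ^ q * D ≤ f (g (δ ^ q)) - f xbar := by
      simp only [hg]; linarith
    calc σ * D = (δ ^ q)⁻¹ * (σ * δ ^ q * D) := by field_simp
      _ ≤ (δ ^ q)⁻¹ * (f (g (δ ^ q)) - f xbar) := by
          exact mul_le_mul_of_nonneg_left h' (inv_nonneg.mpr hq.le)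
  nlinarith
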